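/- Let G be a finite group, N ≤ G a subgroup, and k an algebraically closed field of characteristic zero. Then N is normal in G if and only if the induction to G of the trivial character of N, restricted back to N, equals [G:N] times the trivial character of N. -/

import Mathlib

open scoped Classical

section GroupDefs

variable (k : Type) [Field k]

/-- A finite-dimensional representation of a group `G` over `k`. -/
structure GFinRep (G : Type) [Group G] where
  V : Type
  [acg : AddCommGroup V]
  [mod : Module k V]
  [fin : Module.Finite k V]
  ρ : G →* (V →ₗ[k] V)

attribute [instance] GFinRep.acg GFinRep.mod GFinRep.fin

variable {G : Type} [Group G]

/-- The character of a finite-dimensional representation of a group. -/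
noncomputable def GFinRep.chr (r : GFinRep k G) : G → k :=
  fun g => LinearMap.trace k r.V (r.ρ g)

/-- Irreducibility: the space is nontrivial and has no proper nonzero invariant subspaces. -/
def GFinRep.IsIrred (r : GFinRep k G) : Prop :=
  Nontrivial r.V ∧ ∀ W : Submodule k r.V, (∀ g : G, ∀ v ∈ W, r.ρ g v ∈ W) → W = ⊥ ∨ W = ⊤

/-- An irreducible character of the group `G` over `k`. -/
def IsIrrCharG (φ : G → k) : Prop :=
  ∃ r : GFinRep k G, GFinRep.IsIrred k r ∧ φ = GFinRep.chr k r

variable (G)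

/-- The induced class function: `(Ind f)(g) = |N|⁻¹ ∑_{x ∈ G, x⁻¹gx ∈ N} f(x⁻¹gx)`. -/
noncomputable def indCF [Fintype G] (N : Subgroup G) (f : ↥N → k) : G → k :=
  fun g => (Nat.card ↥N : k)⁻¹ * ∑ x : G, if h : x⁻¹ * g * x ∈ N then f ⟨x⁻¹ * g * x, h⟩ else 0

/-- Restriction of a class function on `G` to the subgroup `N`. -/
def resCF (N : Subgroup G) (F : G → k) : ↥N → k :=
  fun n => F (n : G)

/-- The inner product (multiplicity pairing) of class functions on a finite group,
over a field of characteristic zero. -/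
noncomputable def innerCF [Fintype G] (φ ψ : G → k) : k :=
  (Nat.card G : k)⁻¹ * ∑ g : G, φ g * ψ g⁻¹

end GroupDefs

theorem normal_iff_res_ind_trivial_group (k : Type) [Field k] [IsAlgClosed k] [CharZero k]
    (G : Type) [Group G] [Fintype G] (N : Subgroup G) :
    N.Normal ↔
      (fun n : ↥N => indCF k G N (fun _ : ↥N => (1 : k)) (n : G)) =
        (fun _ : ↥N => (N.index : k)) := by
  have hNcard : (Nat.card ↥N : k) ≠ 0 := Nat.cast_ne_zero.mpr Nat.card_pos.ne'
  have hmul : (Nat.card ↥N : k) * (N.index : k) = (Fintype.card G : k) := by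
    rw [← Nat.cast_mul, Subgroup.card_mul_index, Nat.card_eq_fintype_card]
  constructor
  · intro hN
    funext n
    have hall : ∀ x : G, x⁻¹ * (n : G) * x ∈ N := fun x => by
      simpa using hN.conj_mem _ n.2 x⁻¹
    simp only [indCF]
    rw [Finset.sum_congr rfl (fun x _ => dif_pos (hall x))]
    rw [Finset.sum_const, Finset.card_univ, nsmul_eq_mul, mul_one]
    field_simp
    rw [mul_comm] at hmul
    rw [Nat.card_eq_fintype_card] at hmul
    rw [Nat.card_eq_fintype_card]
    linear_combination hmul.symm
  · intro h
    constructor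
    intro n hn g
    have h1 := congrFun h ⟨n, hn⟩
    simp only [indCF] at h1
    have h2 : (∑ x : G, if _ : x⁻¹ * n * x ∈ N then (1 : k) else 0)
        = (Fintype.card G : k) := by
      have := congrArg (fun t => (Nat.card ↥N : k) * t) h1
      rw [← mul_assoc, mul_inv_cancel₀ hNcard, one_mul] at this
      rw [this, hmul]
    have h3 : (∑ x : G, if x⁻¹ * n * x ∈ N then (1 : k) else 0)
        = (Fintype.card G : k) := by simpa using h2
    rw [Finset.sum_boole] at h3
    have h4 : (Finset.univ.filter (fun x : G => x⁻¹ * n * x ∈ N)).card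
        = Fintype.card G := by exact_mod_cast h3
    have h5 : (g⁻¹ : G) ∈ Finset.univ.filter (fun x : G => x⁻¹ * n * x ∈ N) := by
      rw [Finset.eq_univ_of_card _ h4]
      exact Finset.mem_univ _
    simpa using Finset.mem_filter.mp h5 |>.2
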